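/- The function h(φ₁,φ₂) ∝ φ₁^{s₁−1/2}(1+φ₁)^{−1/2} φ₂^{s₁+s₂−1/2}(1−(1+φ₁)φ₂)^{n−s₁−s₂−1/2} is integrable over the region {φ₁>0, 0<φ₂<1/(1+φ₁)} whenever s₁, s₂ are nonnegative integers with s₁+s₂ < n and s₁ ≥ 1, s₂ ≥ 1; hence it defines a proper (normalizable) probability density. -/
import Mathlib


open Set MeasureTheory

/-- The (unnormalized) fiducial density
`h(φ₁,φ₂) = φ₁^{s₁-1/2} (1+φ₁)^{-1/2} φ₂^{s₁+s₂-1/2} (1-(1+φ₁)φ₂)^{n-s₁-s₂-1/2}`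
is integrable over `{φ₁ > 0, 0 < φ₂ < 1/(1+φ₁)}` whenever `s₁, s₂` are
nonnegative integers with `1 ≤ s₁`, `1 ≤ s₂` and `s₁ + s₂ < n`, and its
integral is positive; hence it defines a proper probability density. -/
theorem trinomial_fiducial_density_integrable
    (n s₁ s₂ : ℕ) (hs₁ : 1 ≤ s₁) (hs₂ : 1 ≤ s₂) (hn : s₁ + s₂ < n)
    (h : ℝ × ℝ → ℝ)
    (hh : h = fun φ => φ.1 ^ ((s₁ : ℝ) - 1 / 2) * (1 + φ.1) ^ (-(1:ℝ) / 2) *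
      φ.2 ^ ((s₁ : ℝ) + (s₂ : ℝ) - 1 / 2) *
      (1 - (1 + φ.1) * φ.2) ^ ((n : ℝ) - (s₁ : ℝ) - (s₂ : ℝ) - 1 / 2))
    (R : Set (ℝ × ℝ))
    (hR : R = {φ : ℝ × ℝ | 0 < φ.1 ∧ 0 < φ.2 ∧ (1 + φ.1) * φ.2 < 1}) :
    IntegrableOn h R volume ∧ 0 < ∫ φ in R, h φ := by
  have hs1 : (1:ℝ) ≤ (s₁ : ℝ) := by exact_mod_cast hs₁
  have hs2 : (1:ℝ) ≤ (s₂ : ℝ) := by exact_mod_cast hs₂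
  have hnr : (s₁:ℝ) + (s₂:ℝ) + 1 ≤ (n:ℝ) := by exact_mod_cast hn
  -- R is open, hence measurable
  have hRopen : IsOpen R := by
    rw [hR]
    have h1 : IsOpen {φ : ℝ × ℝ | 0 < φ.1} := isOpen_lt continuous_const continuous_fst
    have h2 : IsOpen {φ : ℝ × ℝ | 0 < φ.2} := isOpen_lt continuous_const continuous_snd
    have h3 : IsOpen {φ : ℝ × ℝ | (1 + φ.1) * φ.2 < 1} :=
      isOpen_lt (by fun_prop) continuous_const
    exact h1.inter (h2.inter h3)
  have hRmeas : MeasurableSet R := hRopen.measurableSet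
  have hmeas : Measurable h := by rw [hh]; fun_prop
  -- h is positive on R
  have hpos : ∀ φ ∈ R, 0 < h φ := by
    intro φ hφ
    rw [hR] at hφ
    obtain ⟨h1, h2, h3⟩ := hφ
    have hx1 : (0:ℝ) < 1 + φ.1 := by linarith
    have h4 : (0:ℝ) < 1 - (1 + φ.1) * φ.2 := by linarith
    rw [hh]
    exact mul_pos (mul_pos (mul_pos (Real.rpow_pos_of_pos h1 _)
      (Real.rpow_pos_of_pos hx1 _)) (Real.rpow_pos_of_pos h2 _))
      (Real.rpow_pos_of_pos h4 _)
  -- the dominating function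
  set g : ℝ × ℝ → ℝ :=
    fun φ => (1 + φ.1) ^ (-(7:ℝ)/4) * φ.2 ^ ((s₂:ℝ) - 5/4) with hg
  -- g is integrable on Ioi 0 ×ˢ Ioo 0 1
  have hf1 : IntegrableOn (fun x : ℝ => (1 + x) ^ (-(7:ℝ)/4)) (Ioi 0) volume := by
    have h0 : IntegrableOn (fun x : ℝ => x ^ (-(7:ℝ)/4)) (Ioi 1) volume :=
      integrableOn_Ioi_rpow_of_lt (by norm_num) one_pos
    have hpres : MeasurePreserving (fun x : ℝ => 1 + x) volume volume :=
      measurePreserving_add_left volume 1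
    have hemb : MeasurableEmbedding (fun x : ℝ => 1 + x) :=
      (Homeomorph.addLeft (1:ℝ)).measurableEmbedding
    have h1 := (hpres.integrableOn_comp_preimage hemb).mpr h0
    have hpre : (fun x : ℝ => 1 + x) ⁻¹' (Ioi 1) = Ioi 0 := by
      ext x; simp [lt_add_iff_pos_right]
    rw [hpre] at h1
    exact h1
  have hf2 : IntegrableOn (fun y : ℝ => y ^ ((s₂:ℝ) - 5/4)) (Ioo 0 1) volume := by
    have h0 : IntervalIntegrable (fun y : ℝ => y ^ ((s₂:ℝ) - 5/4)) volume 0 1 :=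
      intervalIntegral.intervalIntegrable_rpow' (by linarith)
    rw [intervalIntegrable_iff_integrableOn_Ioo_of_le (by norm_num)] at h0
    exact h0
  have hg_int : IntegrableOn g (Ioi (0:ℝ) ×ˢ Ioo (0:ℝ) 1) volume := by
    rw [IntegrableOn, Measure.volume_eq_prod, ← Measure.prod_restrict]
    exact hf1.mul_prod hf2
  have hsub : R ⊆ Ioi (0:ℝ) ×ˢ Ioo (0:ℝ) 1 := by
    rw [hR]
    rintro ⟨x, y⟩ ⟨h1, h2, h3⟩
    exact ⟨h1, h2, by nlinarith⟩
  have hg_R : IntegrableOn g R volume := hg_int.mono_set hsub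
  -- pointwise bound h ≤ g on R
  have hbound : ∀ φ ∈ R, h φ ≤ g φ := by
    rintro ⟨x, y⟩ hφ
    rw [hR] at hφ
    obtain ⟨hx, hy, hxy⟩ := hφ
    have hx1 : (0:ℝ) < 1 + x := by linarith
    have hb : (0:ℝ) ≤ 1 - (1 + x) * y := by linarith
    have hyle : y ≤ (1 + x)⁻¹ := by
      rw [← one_div, le_div_iff₀ hx1]
      nlinarith
    have hB : (1 - (1 + x) * y) ^ ((n:ℝ) - (s₁:ℝ) - (s₂:ℝ) - 1/2) ≤ 1 :=
      Real.rpow_le_one hb (by nlinarith) (by linarith)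
    have e1 : y ^ ((s₁:ℝ) + (s₂:ℝ) - 1 / 2)
        = y ^ ((s₁:ℝ) + 3/4) * y ^ ((s₂:ℝ) - 5/4) := by
      rw [← Real.rpow_add hy]; congr 1; ring
    rw [hh, hg]
    dsimp only
    rw [e1]
    calc x ^ ((s₁:ℝ) - 1 / 2) * (1 + x) ^ (-(1:ℝ) / 2) *
          (y ^ ((s₁:ℝ) + 3/4) * y ^ ((s₂:ℝ) - 5/4)) *
          (1 - (1 + x) * y) ^ ((n:ℝ) - (s₁:ℝ) - (s₂:ℝ) - 1 / 2)
        ≤ (1 + x) ^ ((s₁:ℝ) - 1 / 2) * (1 + x) ^ (-(1:ℝ) / 2) *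
          (((1 + x)⁻¹) ^ ((s₁:ℝ) + 3/4) * y ^ ((s₂:ℝ) - 5/4)) * 1 := by
          gcongr <;> first
            | exact hyle
            | exact hB
            | linarith
      _ = (1 + x) ^ (-(7:ℝ)/4) * y ^ ((s₂:ℝ) - 5/4) := by
          rw [mul_one, Real.inv_rpow hx1.le, ← Real.rpow_neg hx1.le]
          have e2 : (1 + x) ^ ((s₁:ℝ) - 1 / 2) * (1 + x) ^ (-(1:ℝ) / 2) *
              ((1 + x) ^ (-((s₁:ℝ) + 3/4)) * y ^ ((s₂:ℝ) - 5/4))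
              = (1 + x) ^ ((s₁:ℝ) - 1 / 2) * (1 + x) ^ (-(1:ℝ) / 2) *
                (1 + x) ^ (-((s₁:ℝ) + 3/4)) * y ^ ((s₂:ℝ) - 5/4) := by ring
          rw [e2, ← Real.rpow_add hx1, ← Real.rpow_add hx1]
          congr 2
          ring
  -- integrability
  have hInt : IntegrableOn h R volume := by
    refine hg_R.integrable.mono hmeas.aestronglyMeasurable ?_
    refine ae_restrict_of_forall_mem hRmeas fun φ hφ => ?_
    rw [Real.norm_eq_abs, Real.norm_eq_abs, abs_of_pos (hpos φ hφ)]
    exact (hbound φ hφ).trans (le_abs_self _)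
  refine ⟨hInt, ?_⟩
  -- positivity of the integral
  have hnonneg : 0 ≤ᵐ[volume.restrict R] h :=
    ae_restrict_of_forall_mem hRmeas fun φ hφ => (hpos φ hφ).le
  rw [setIntegral_pos_iff_support_of_nonneg_ae hnonneg hInt]
  have hRsub : R ⊆ Function.support h ∩ R :=
    fun φ hφ => ⟨(hpos φ hφ).ne', hφ⟩
  have hRpos : 0 < volume R := by
    refine hRopen.measure_pos volume ⟨(1, 1/4), ?_⟩
    rw [hR]
    norm_num
  exact lt_of_lt_of_le hRpos (measure_mono hRsub)
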